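/- Let s be a nonzero real number. If u : [-1,0] → ℂ and w : [0,1] → ℂ are twice continuously differentiable functions satisfying u''(ξ) = −s²·u(ξ) for all ξ ∈ [-1,0], w''(ξ) = i·s·w(ξ) for all ξ ∈ [0,1], u'(-1) = 0, w(1) = 0, i·s·u(0) = w(0) and u'(0) = w'(0), then u ≡ 0 and w ≡ 0. -/

import Mathlib

open Complex Set

/-- Let `s` be a nonzero real number. If `u : [-1,0] → ℂ` and `w : [0,1] → ℂ` are twice
continuously differentiable with `u'' = −s²u` on `[-1,0]`, `w'' = isw` on `[0,1]`,
`u'(-1) = 0`, `w(1) = 0`, `isu(0) = w(0)` and `u'(0) = w'(0)`, then `u ≡ 0` and `w ≡ 0`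
(on the respective intervals). -/
theorem wave_heat_neumann_injectivity_on_imaginary_axis (s : ℝ) (hs : s ≠ 0)
    (u w : ℝ → ℂ) (hu : ContDiff ℝ 2 u) (hw : ContDiff ℝ 2 w)
    (hode_u : ∀ ξ ∈ Set.Icc (-1:ℝ) 0, deriv (deriv u) ξ = -(s:ℂ) ^ 2 * u ξ)
    (hode_w : ∀ ξ ∈ Set.Icc (0:ℝ) 1, deriv (deriv w) ξ = Complex.I * s * w ξ)
    (hbc_u : deriv u (-1) = 0) (hbc_w : w 1 = 0)
    (hcpl1 : Complex.I * s * u 0 = w 0) (hcpl2 : deriv u 0 = deriv w 0) :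
    (∀ ξ ∈ Set.Icc (-1:ℝ) 0, u ξ = 0) ∧ (∀ ξ ∈ Set.Icc (0:ℝ) 1, w ξ = 0) := by
  have hu1 : Differentiable ℝ u := hu.differentiable two_ne_zero
  have hw1 : Differentiable ℝ w := hw.differentiable two_ne_zero
  have hu2' : ContDiff ℝ 1 (deriv u) :=
    (contDiff_succ_iff_deriv.mp (show ContDiff ℝ (1+1) u by exact_mod_cast hu)).2.2
  have hw2' : ContDiff ℝ 1 (deriv w) :=
    (contDiff_succ_iff_deriv.mp (show ContDiff ℝ (1+1) w by exact_mod_cast hw)).2.2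
  have hu2 : Differentiable ℝ (deriv u) := hu2'.differentiable one_ne_zero
  have hw2 : Differentiable ℝ (deriv w) := hw2'.differentiable one_ne_zero
  have hprod_u : ∀ ξ : ℝ, HasDerivAt (fun t => deriv u t * star (u t))
      (deriv (deriv u) ξ * star (u ξ) + deriv u ξ * star (deriv u ξ)) ξ :=
    fun ξ => ((hu2 ξ).hasDerivAt).mul ((hu1 ξ).hasDerivAt.star)
  have hprod_w : ∀ ξ : ℝ, HasDerivAt (fun t => deriv w t * star (w t))
      (deriv (deriv w) ξ * star (w ξ) + deriv w ξ * star (deriv w ξ)) ξ :=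
    fun ξ => ((hw2 ξ).hasDerivAt).mul ((hw1 ξ).hasDerivAt.star)
  -- Step A : Im (u' conj u) = 0 on [-1,0]
  have hhd : ∀ ξ ∈ Set.Icc (-1:ℝ) 0,
      HasDerivAt (fun t => (deriv u t * star (u t)).im) 0 ξ := by
    intro ξ hξ
    have key : HasDerivAt (fun t => (deriv u t * star (u t)).im)
        ((deriv (deriv u) ξ * star (u ξ) + deriv u ξ * star (deriv u ξ)).im) ξ :=
      Complex.imCLM.hasFDerivAt.comp_hasDerivAt ξ (hprod_u ξ)
    have h0 : (deriv (deriv u) ξ * star (u ξ) + deriv u ξ * star (deriv u ξ)).im = 0 := by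
      rw [hode_u ξ hξ]
      simp [Complex.add_im, Complex.mul_im, Complex.mul_re, ← Complex.ofReal_pow]
      ring
    rw [h0] at key
    exact key
  have hA : ∀ ξ ∈ Set.Icc (-1:ℝ) 0, (deriv u ξ * star (u ξ)).im = 0 := by
    have hcont : Continuous fun t => (deriv u t * star (u t)).im :=
      Complex.continuous_im.comp (hu2.continuous.mul hu1.continuous.star)
    intro ξ hξ
    have := constant_of_has_deriv_right_zero (f := fun t => (deriv u t * star (u t)).im)
      (a := -1) (b := 0) hcont.continuousOn
      (fun x hx => (hhd x (Ico_subset_Icc_self hx)).hasDerivWithinAt) ξ hξ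
    simpa [hbc_u] using this
  -- Step B : g := Re (w' conj w) has nonneg derivative, vanishes at both ends
  set g : ℝ → ℝ := fun t => (deriv w t * star (w t)).re with hg
  have hgd : ∀ ξ ∈ Set.Icc (0:ℝ) 1, HasDerivAt g (Complex.normSq (deriv w ξ)) ξ := by
    intro ξ hξ
    have key : HasDerivAt g
        ((deriv (deriv w) ξ * star (w ξ) + deriv w ξ * star (deriv w ξ)).re) ξ :=
      Complex.reCLM.hasFDerivAt.comp_hasDerivAt ξ (hprod_w ξ)
    have h0 : (deriv (deriv w) ξ * star (w ξ) + deriv w ξ * star (deriv w ξ)).re =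
        Complex.normSq (deriv w ξ) := by
      rw [hode_w ξ hξ]
      simp [Complex.add_re, Complex.mul_re, Complex.mul_im, Complex.normSq_apply]
      ring
    rw [h0] at key
    exact key
  have hgcont : Continuous g :=
    Complex.continuous_re.comp (hw2.continuous.mul hw1.continuous.star)
  have hg1 : g 1 = 0 := by simp [hg, hbc_w]
  have hg0 : g 0 = 0 := by
    have hA0 := hA 0 (by constructor <;> norm_num)
    simp only [hg]
    rw [← hcpl2, ← hcpl1]
    simp only [Complex.mul_re, Complex.mul_im, Complex.star_def, Complex.conj_re,
      Complex.conj_im, Complex.I_re, Complex.I_im, Complex.ofReal_re, Complex.ofReal_im] at hA0 ⊢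
    linear_combination s * hA0
  have hgmono : MonotoneOn g (Set.Icc (0:ℝ) 1) := by
    apply monotoneOn_of_deriv_nonneg (convex_Icc 0 1) hgcont.continuousOn
    · intro x hx
      rw [interior_Icc] at hx
      exact ((hgd x (Ioo_subset_Icc_self hx)).differentiableAt).differentiableWithinAt
    · intro x hx
      rw [interior_Icc] at hx
      rw [(hgd x (Ioo_subset_Icc_self hx)).deriv]
      exact Complex.normSq_nonneg _
  have hgzero : ∀ x ∈ Set.Icc (0:ℝ) 1, g x = 0 := by
    intro x hx
    have h1 : g x ≤ g 1 := hgmono hx (by constructor <;> norm_num) hx.2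
    have h2 : g 0 ≤ g x := hgmono (by constructor <;> norm_num) hx hx.1
    rw [hg0] at h2; rw [hg1] at h1; linarith
  -- w' = 0 on (0,1), hence on [0,1] by continuity
  have hw'Ioo : ∀ x ∈ Set.Ioo (0:ℝ) 1, deriv w x = 0 := by
    intro x hx
    have heq : g =ᶠ[nhds x] fun _ => (0:ℝ) :=
      Filter.eventually_of_mem (isOpen_Ioo.mem_nhds hx)
        (fun y hy => hgzero y (Ioo_subset_Icc_self hy))
    have hzero : HasDerivAt g 0 x := (hasDerivAt_const x (0:ℝ)).congr_of_eventuallyEq heq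
    have := hzero.unique (hgd x (Ioo_subset_Icc_self hx))
    exact Complex.normSq_eq_zero.mp this.symm
  have hw'Icc : ∀ x ∈ Set.Icc (0:ℝ) 1, deriv w x = 0 := by
    have hclosed : IsClosed {x : ℝ | deriv w x = 0} :=
      isClosed_eq hw2.continuous continuous_const
    have : Set.Icc (0:ℝ) 1 ⊆ {x : ℝ | deriv w x = 0} := by
      rw [← closure_Ioo (by norm_num : (0:ℝ) ≠ 1)]
      exact hclosed.closure_subset_iff.mpr hw'Ioo
    exact fun x hx => this hx
  -- w ≡ 0 on [0,1]
  have hwconst : ∀ x ∈ Set.Icc (0:ℝ) 1, w x = w 0 :=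
    constant_of_has_deriv_right_zero hw1.continuous.continuousOn
      (fun x hx => by
        have := (hw1 x).hasDerivAt
        rw [hw'Icc x (Ico_subset_Icc_self hx)] at this
        exact this.hasDerivWithinAt)
  have hw0 : w 0 = 0 := by
    have := hwconst 1 (by constructor <;> norm_num)
    rw [hbc_w] at this; exact this.symm
  have hwzero : ∀ ξ ∈ Set.Icc (0:ℝ) 1, w ξ = 0 := fun ξ hξ => by
    rw [hwconst ξ hξ, hw0]
  -- Step C : u(0) = 0 and u'(0) = 0
  have hu0 : u 0 = 0 := by
    have : Complex.I * s * u 0 = 0 := by rw [hcpl1, hw0]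
    have hIs : (Complex.I * s) ≠ 0 := by
      simp [Complex.ext_iff, hs]
    exact (mul_eq_zero.mp this).resolve_left hIs
  have hu'0 : deriv u 0 = 0 := by
    rw [hcpl2]; exact hw'Icc 0 (by constructor <;> norm_num)
  -- Step D : energy for u
  set E : ℝ → ℝ := fun t => (deriv u t * star (deriv u t)).re + s^2 * (u t * star (u t)).re
    with hE
  have hEd : ∀ ξ ∈ Set.Icc (-1:ℝ) 0, HasDerivAt E 0 ξ := by
    intro ξ hξ
    have p1 : HasDerivAt (fun t => deriv u t * star (deriv u t))
        (deriv (deriv u) ξ * star (deriv u ξ) + deriv u ξ * star (deriv (deriv u) ξ)) ξ :=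
      ((hu2 ξ).hasDerivAt).mul ((hu2 ξ).hasDerivAt.star)
    have p2 : HasDerivAt (fun t => u t * star (u t))
        (deriv u ξ * star (u ξ) + u ξ * star (deriv u ξ)) ξ :=
      ((hu1 ξ).hasDerivAt).mul ((hu1 ξ).hasDerivAt.star)
    have q1 : HasDerivAt (fun t => (deriv u t * star (deriv u t)).re)
        ((deriv (deriv u) ξ * star (deriv u ξ) + deriv u ξ * star (deriv (deriv u) ξ)).re) ξ :=
      Complex.reCLM.hasFDerivAt.comp_hasDerivAt ξ p1
    have q2 : HasDerivAt (fun t => (u t * star (u t)).re)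
        ((deriv u ξ * star (u ξ) + u ξ * star (deriv u ξ)).re) ξ :=
      Complex.reCLM.hasFDerivAt.comp_hasDerivAt ξ p2
    have key : HasDerivAt E
        ((deriv (deriv u) ξ * star (deriv u ξ) + deriv u ξ * star (deriv (deriv u) ξ)).re
          + s^2 * (deriv u ξ * star (u ξ) + u ξ * star (deriv u ξ)).re) ξ :=
      q1.add (q2.const_mul (s^2))
    have h0 : (deriv (deriv u) ξ * star (deriv u ξ) + deriv u ξ * star (deriv (deriv u) ξ)).re
        + s^2 * (deriv u ξ * star (u ξ) + u ξ * star (deriv u ξ)).re = 0 := by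
      rw [hode_u ξ hξ]
      simp [Complex.add_re, Complex.mul_re, Complex.mul_im, Complex.star_def,
        Complex.conj_re, Complex.conj_im, ← Complex.ofReal_pow]
      ring
    rw [h0] at key
    exact key
  have hEcont : Continuous E :=
    (Complex.continuous_re.comp (hu2.continuous.mul hu2.continuous.star)).add
      (continuous_const.mul (Complex.continuous_re.comp (hu1.continuous.mul hu1.continuous.star)))
  have hEconst : ∀ x ∈ Set.Icc (-1:ℝ) 0, E x = E (-1) :=
    constant_of_has_deriv_right_zero hEcont.continuousOn
      (fun x hx => (hEd x (Ico_subset_Icc_self hx)).hasDerivWithinAt)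
  have hE0 : E 0 = 0 := by simp [hE, hu0, hu'0]
  have hEzero : ∀ x ∈ Set.Icc (-1:ℝ) 0, E x = 0 := by
    intro x hx
    rw [hEconst x hx, ← hEconst 0 (by constructor <;> norm_num), hE0]
  refine ⟨fun ξ hξ => ?_, hwzero⟩
  have hEξ := hEzero ξ hξ
  rw [hE] at hEξ
  simp only [Complex.star_def, Complex.mul_conj] at hEξ
  have h1 : Complex.normSq (u ξ) = 0 := by
    have n1 : 0 ≤ Complex.normSq (deriv u ξ) := Complex.normSq_nonneg _
    have n2 : 0 ≤ Complex.normSq (u ξ) := Complex.normSq_nonneg _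
    have hs2 : 0 < s^2 := by positivity
    simp only [Complex.ofReal_re] at hEξ
    nlinarith
  exact Complex.normSq_eq_zero.mp h1
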